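/- Suppose f : ℝ^d → ℝ is twice differentiable with ρ-Lipschitz Hessian, and H is a symmetric matrix with ‖H - ∇²f(x)‖ ≤ ε. Let m(s) = f(x) + sᵀ∇f(x) + (1/2)sᵀHs + (σ/3)‖s‖³. Then for every s, f(x+s) ≤ m(s) + (ε/2)‖s‖² + (ρ/6 - σ/3)‖s‖³. -/

import Mathlib

open RealInnerProductSpace

private lemma aux_mono (φ φ' : ℝ → ℝ) (hφ : ∀ t, HasDerivAt φ (φ' t) t)
    (hnn : ∀ t ∈ Set.Icc (0:ℝ) 1, 0 ≤ φ' t) {r : ℝ} (hr : r ∈ Set.Icc (0:ℝ) 1) :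
    φ 0 ≤ φ r := by
  have hmono : MonotoneOn φ (Set.Icc (0:ℝ) 1) := by
    apply monotoneOn_of_deriv_nonneg (convex_Icc 0 1)
    · exact fun t _ => (hφ t).continuousAt.continuousWithinAt
    · exact fun t ht => (hφ t).differentiableAt.differentiableWithinAt
    · intro t ht
      rw [(hφ t).deriv]
      exact hnn t (Set.mem_Icc_of_Ioo (by simpa using ht))
  exact hmono (by norm_num) hr hr.1

theorem stmt_6 (d : ℕ) (f : EuclideanSpace ℝ (Fin d) → ℝ) (ρ ε σ : ℝ)
    (hρ : 0 ≤ ρ) (hε : 0 ≤ ε) (hσ : 0 < σ)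
    (hdiff : Differentiable ℝ f) (hdiff2 : Differentiable ℝ (gradient f))
    (hlipH : ∀ u v, ‖fderiv ℝ (gradient f) u - fderiv ℝ (gradient f) v‖ ≤ ρ * ‖u - v‖)
    (x : EuclideanSpace ℝ (Fin d))
    (H : EuclideanSpace ℝ (Fin d) →L[ℝ] EuclideanSpace ℝ (Fin d))
    (hsym : ∀ u v, ⟪H u, v⟫ = ⟪u, H v⟫)
    (hHapprox : ‖H - fderiv ℝ (gradient f) x‖ ≤ ε)
    (m : EuclideanSpace ℝ (Fin d) → ℝ)
    (hm : m = fun u => f x + ⟪u, gradient f x⟫ + (1 / 2) * ⟪u, H u⟫ + σ / 3 * ‖u‖ ^ 3)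
    (s : EuclideanSpace ℝ (Fin d)) :
    f (x + s) ≤ m s + ε / 2 * ‖s‖ ^ 2 + (ρ / 6 - σ / 3) * ‖s‖ ^ 3 := by
  set A : EuclideanSpace ℝ (Fin d) →L[ℝ] EuclideanSpace ℝ (Fin d) := fderiv ℝ (gradient f) x with hA
  set B : ℝ → (EuclideanSpace ℝ (Fin d) →L[ℝ] EuclideanSpace ℝ (Fin d)) := fun t => fderiv ℝ (gradient f) (x + t • s) with hB
  have hc : ∀ t : ℝ, HasDerivAt (fun t : ℝ => x + t • s) s t := by
    intro t
    simpa using ((hasDerivAt_id t).smul_const s).const_add x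
  have hG : ∀ t : ℝ, HasDerivAt (fun t : ℝ => gradient f (x + t • s)) (B t s) t := by
    intro t
    have := (hdiff2 (x + t • s)).hasFDerivAt.comp_hasDerivAt t (hc t)
    simpa [Function.comp_def] using this
  have hg1 : ∀ t : ℝ, HasDerivAt (fun t : ℝ => (⟪gradient f (x + t • s), s⟫ : ℝ))
      (⟪B t s, s⟫) t := by
    intro t
    have := (hG t).inner ℝ (hasDerivAt_const t s)
    simpa using this
  have hg : ∀ t : ℝ, HasDerivAt (fun t : ℝ => f (x + t • s))
      (⟪gradient f (x + t • s), s⟫) t := by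
    intro t
    have h1 := (hdiff (x + t • s)).hasGradientAt.hasFDerivAt.comp_hasDerivAt t (hc t)
    have h2 : HasDerivAt (fun t : ℝ => f (x + t • s))
        ((InnerProductSpace.toDual ℝ (EuclideanSpace ℝ (Fin d)) (gradient f (x + t • s))) s) t := by
      simpa [Function.comp_def] using h1
    rwa [InnerProductSpace.toDual_apply_apply] at h2
  have hkey : ∀ t ∈ Set.Icc (0:ℝ) 1, (⟪B t s, s⟫ : ℝ) ≤ ⟪A s, s⟫ + ρ * t * ‖s‖ ^ 3 := by
    intro t ht
    have h1 : (⟪B t s - A s, s⟫ : ℝ) ≤ ‖B t s - A s‖ * ‖s‖ := real_inner_le_norm _ _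
    have h2 : ‖B t s - A s‖ ≤ ‖B t - A‖ * ‖s‖ := by
      have := (B t - A).le_opNorm s
      rwa [ContinuousLinearMap.sub_apply] at this
    have h3 : ‖B t - A‖ ≤ ρ * (t * ‖s‖) := by
      have := hlipH (x + t • s) x
      have hx : x + t • s - x = t • s := by abel
      rw [hx] at this
      rw [norm_smul, Real.norm_eq_abs, abs_of_nonneg ht.1] at this
      linarith
    have h4 : (⟪B t s - A s, s⟫ : ℝ) ≤ ρ * t * ‖s‖ ^ 3 := by
      calc (⟪B t s - A s, s⟫ : ℝ) ≤ ‖B t s - A s‖ * ‖s‖ := h1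
        _ ≤ (‖B t - A‖ * ‖s‖) * ‖s‖ :=
            mul_le_mul_of_nonneg_right h2 (norm_nonneg _)
        _ ≤ ((ρ * (t * ‖s‖)) * ‖s‖) * ‖s‖ :=
            mul_le_mul_of_nonneg_right
              (mul_le_mul_of_nonneg_right h3 (norm_nonneg _)) (norm_nonneg _)
        _ = ρ * t * ‖s‖ ^ 3 := by ring
    have h5 : (⟪B t s - A s, s⟫ : ℝ) = ⟪B t s, s⟫ - ⟪A s, s⟫ := inner_sub_left _ _ _
    linarith [h4, h5 ▸ h4]
  have hG0 : gradient f (x + (0:ℝ) • s) = gradient f x := by norm_num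
  -- step 1: bound the directional derivative along the curve
  have hstep1 : ∀ r ∈ Set.Icc (0:ℝ) 1,
      (⟪gradient f (x + r • s), s⟫ : ℝ) ≤ ⟪gradient f x, s⟫ + ⟪A s, s⟫ * r
        + ρ * ‖s‖ ^ 3 * r ^ 2 / 2 := by
    intro r hr
    have haux := aux_mono
      (fun t => ⟪A s, s⟫ * t + ρ * ‖s‖ ^ 3 * t ^ 2 / 2
        - (⟪gradient f (x + t • s), s⟫ - ⟪gradient f x, s⟫))
      (fun t => ⟪A s, s⟫ + ρ * ‖s‖ ^ 3 * t - ⟪B t s, s⟫) ?_ ?_ hr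
    · simp only [hG0] at haux
      linarith
    · intro t
      have hpoly : HasDerivAt (fun t : ℝ => (⟪A s, s⟫ : ℝ) * t + ρ * ‖s‖ ^ 3 * t ^ 2 / 2)
          (⟪A s, s⟫ + ρ * ‖s‖ ^ 3 * t) t := by
        have h1 := (hasDerivAt_id t).const_mul (⟪A s, s⟫ : ℝ)
        have h2 := ((hasDerivAt_pow 2 t).const_mul (ρ * ‖s‖ ^ 3)).div_const 2
        refine (h1.add h2).congr_deriv ?_
        ring
      have hsub : HasDerivAt
          (fun t : ℝ => (⟪gradient f (x + t • s), s⟫ : ℝ) - ⟪gradient f x, s⟫)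
          (⟪B t s, s⟫) t := by
        simpa using (hg1 t).sub_const (⟪gradient f x, s⟫ : ℝ)
      exact hpoly.sub hsub
    · intro t ht
      have := hkey t ht
      linarith
  -- step 2: integrate again to bound f (x + s)
  have hstep2 : f (x + (1:ℝ) • s) ≤ f x + ⟪gradient f x, s⟫ + ⟪A s, s⟫ / 2
      + ρ * ‖s‖ ^ 3 / 6 := by
    have haux := aux_mono
      (fun t => ⟪gradient f x, s⟫ * t + ⟪A s, s⟫ * t ^ 2 / 2
        + ρ * ‖s‖ ^ 3 * t ^ 3 / 6 - (f (x + t • s) - f x))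
      (fun t => ⟪gradient f x, s⟫ + ⟪A s, s⟫ * t + ρ * ‖s‖ ^ 3 * t ^ 2 / 2
        - ⟪gradient f (x + t • s), s⟫) ?_ ?_ (Set.mem_Icc.2 ⟨zero_le_one, le_refl 1⟩)
    · rw [show x + (0:ℝ) • s = x by rw [zero_smul, add_zero]] at haux
      linarith
    · intro t
      have h1 := (hasDerivAt_id t).const_mul (⟪gradient f x, s⟫ : ℝ)
      have h2 := ((hasDerivAt_pow 2 t).const_mul (⟪A s, s⟫ : ℝ)).div_const 2
      have h3 := ((hasDerivAt_pow 3 t).const_mul (ρ * ‖s‖ ^ 3)).div_const 6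
      have h4 : HasDerivAt (fun t : ℝ => f (x + t • s) - f x)
          (⟪gradient f (x + t • s), s⟫) t := by
        simpa using (hg t).sub_const (f x)
      refine (((h1.add h2).add h3).sub h4).congr_deriv ?_
      push_cast
      ring
    · intro t ht
      have := hstep1 t ht
      linarith
  -- compare A with H
  have hAH : (⟪A s, s⟫ : ℝ) ≤ ⟪H s, s⟫ + ε * ‖s‖ ^ 2 := by
    have h1 : (⟪A s - H s, s⟫ : ℝ) ≤ ‖A s - H s‖ * ‖s‖ := real_inner_le_norm _ _
    have h2 : ‖A s - H s‖ ≤ ‖H - A‖ * ‖s‖ := by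
      calc ‖A s - H s‖ = ‖(H - A) s‖ := by rw [ContinuousLinearMap.sub_apply, norm_sub_rev]
        _ ≤ ‖H - A‖ * ‖s‖ := (H - A).le_opNorm s
    have h3 : (⟪A s - H s, s⟫ : ℝ) = ⟪A s, s⟫ - ⟪H s, s⟫ := inner_sub_left _ _ _
    nlinarith [norm_nonneg s, mul_le_mul_of_nonneg_right h2 (norm_nonneg s), hHapprox,
      mul_le_mul_of_nonneg_right (mul_le_mul_of_nonneg_right hHapprox (norm_nonneg s)) (norm_nonneg s)]
  have hfin : f (x + s) ≤ f x + ⟪gradient f x, s⟫ + ⟪H s, s⟫ / 2 + ε * ‖s‖ ^ 2 / 2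
      + ρ * ‖s‖ ^ 3 / 6 := by
    have : x + (1:ℝ) • s = x + s := by rw [one_smul]
    rw [this] at hstep2
    linarith
  rw [hm]
  simp only
  rw [real_inner_comm s (gradient f x), real_inner_comm s (H s)] at *
  nlinarith [hfin]
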